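/- (Proposition 7.3, recursive form) For every n ≥ 1, the set of symmetric 2-Brauer relations of rank 2n is finite and its cardinality equals M^s(n). -/

import Mathlib

/-- The Motzkin numbers: `M 0 = 1`, `M 1 = 1` and, for `n ≥ 2`,
`M n = M (n-1) + ∑_{i=0}^{n-2} M i * M (n-2-i)`. -/
def motzkin : ℕ → ℕ
  | 0 => 1
  | 1 => 1
  | n + 2 =>
      motzkin (n + 1) +
        ∑ i ∈ (Finset.range (n + 1)).attach, motzkin i.1 * motzkin (n - i.1)
decreasing_by
  all_goals
    first
      | omega
      | (have h := Finset.mem_range.mp i.2; omega)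

/-- `Ms 0 = 1`, `Ms 1 = 2` and, for `n ≥ 2`,
`Ms n = Ms (n-1) + M (n-1) + 2 * ∑_{i=0}^{n-2} M i * Ms (n-2-i)`. -/
def Ms : ℕ → ℕ
  | 0 => 1
  | 1 => 2
  | n + 2 =>
      Ms (n + 1) + motzkin (n + 1) +
        2 * ∑ i ∈ (Finset.range (n + 1)).attach, motzkin i.1 * Ms (n - i.1)
decreasing_by
  all_goals
    first
      | omega
      | (have h := Finset.mem_range.mp i.2; omega)


/-- no crossing w.r.t. values (linear order on ℕ) -/
def NoCross (σ : ℕ → ℕ) : Prop := ¬∃ i j : ℕ, i < j ∧ j < σ i ∧ σ i < σ j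

/-- linear noncrossing partial matchings supported on `[a, b)` -/
def LNC (a b : ℕ) : Set (ℕ → ℕ) :=
  {σ | Function.Involutive σ ∧ (∀ x, x < a → σ x = x) ∧ (∀ x, b ≤ x → σ x = x) ∧ NoCross σ}

/-- symmetric circular noncrossing matchings supported on `[a,b) ∪ [a+n, b+n)`,
symmetric under `x ↦ x + n (mod 2n)`; intended for `a ≤ b ≤ n`. -/
def CS (a b n : ℕ) : Set (ℕ → ℕ) :=
  {σ | Function.Involutive σ ∧ (∀ x, x < a → σ x = x) ∧
    (∀ x, b ≤ x → x < a + n → σ x = x) ∧ (∀ x, b + n ≤ x → σ x = x) ∧ NoCross σ ∧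
    (∀ x, x < b → σ (x + n) = if σ x < b then σ x + n else σ x - n)}

/-- functions fixing `[N,∞)` and mapping `[0,N)` into itself -/
def BoxFun (N : ℕ) : Set (ℕ → ℕ) := {σ | (∀ x, N ≤ x → σ x = x) ∧ ∀ x, x < N → σ x < N}

lemma boxFun_finite (N : ℕ) : (BoxFun N).Finite := by
  have h : BoxFun N ⊆ Set.range (fun (τ : Fin N → Fin N) => fun x : ℕ =>
      if h : x < N then (τ ⟨x, h⟩ : ℕ) else x) := by
    rintro σ ⟨h1, h2⟩
    refine ⟨fun i => ⟨σ i, h2 i i.2⟩, funext fun x => ?_⟩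
    by_cases hx : x < N
    · simp [hx]
    · simp [hx, h1 x (le_of_not_gt hx)]
  exact (Set.finite_range _).subset h

lemma lnc_box {a b : ℕ} {σ : ℕ → ℕ} (h : σ ∈ LNC a b) : σ ∈ BoxFun b := by
  obtain ⟨hi, hlo, hhi, _⟩ := h
  refine ⟨hhi, fun x hx => ?_⟩
  by_contra hc
  have := hhi _ (le_of_not_gt hc)
  have := hi x
  omega

lemma cs_box {a b n : ℕ} {σ : ℕ → ℕ} (h : σ ∈ CS a b n) : σ ∈ BoxFun (b + n) := by
  obtain ⟨hi, hlo, hmid, hhi, _⟩ := h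
  refine ⟨hhi, fun x hx => ?_⟩
  by_contra hc
  have := hhi _ (le_of_not_gt hc)
  have := hi x
  omega

lemma lnc_finite (a b : ℕ) : (LNC a b).Finite :=
  (boxFun_finite b).subset fun _ h => lnc_box h

lemma cs_finite (a b n : ℕ) : (CS a b n).Finite :=
  (boxFun_finite (b + n)).subset fun _ h => cs_box h

/-- ncard of a disjoint finite union indexed by a Finset -/
lemma ncard_biUnion {α β : Type*} (s : Finset α) (f : α → Set β)
    (hf : ∀ a ∈ s, (f a).Finite)
    (hd : ∀ a ∈ s, ∀ b ∈ s, a ≠ b → Disjoint (f a) (f b)) :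
    (⋃ a ∈ s, f a).ncard = ∑ a ∈ s, (f a).ncard := by
  classical
  induction s using Finset.induction with
  | empty => simp
  | @insert x s hx ih =>
    rw [Finset.set_biUnion_insert, Finset.sum_insert hx]
    rw [Set.ncard_union_eq ?_ (hf x (Finset.mem_insert_self x s)) ?_]
    · rw [ih (fun a ha => hf a (Finset.mem_insert_of_mem ha))
        (fun a ha b hb => hd a (Finset.mem_insert_of_mem ha) b (Finset.mem_insert_of_mem hb))]
    · refine Set.disjoint_iUnion₂_right.mpr fun a ha => ?_
      exact hd x (Finset.mem_insert_self x s) a (Finset.mem_insert_of_mem ha)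
        (fun h => hx (h ▸ ha))
    · exact Set.Finite.biUnion s.finite_toSet
        (fun a ha => hf a (Finset.mem_insert_of_mem ha))

/-- clean recursion for motzkin -/
lemma motzkin_rec (m : ℕ) (hm : 1 ≤ m) :
    motzkin m = motzkin (m - 1) + ∑ i ∈ Finset.range (m - 1), motzkin i * motzkin (m - 2 - i) := by
  match m, hm with
  | 1, _ => simp [motzkin]
  | (n+2), _ =>
    show motzkin (n+2) = _
    rw [motzkin]
    simp only [Nat.add_sub_cancel]
    congr 1
    rw [show n + 2 - 1 = n + 1 from rfl]
    exact Finset.sum_attach (Finset.range (n+1)) (fun i => motzkin i * motzkin (n - i))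

lemma Ms_rec (m : ℕ) (hm : 1 ≤ m) :
    Ms m = Ms (m - 1) + motzkin (m - 1) +
      2 * ∑ i ∈ Finset.range (m - 1), motzkin i * Ms (m - 2 - i) := by
  match m, hm with
  | 1, _ => simp [Ms, motzkin]
  | (n+2), _ =>
    show Ms (n+2) = _
    rw [Ms]
    simp only [Nat.add_sub_cancel]
    congr 2
    rw [show n + 2 - 1 = n + 1 from rfl]
    exact Finset.sum_attach (Finset.range (n+1)) (fun i => motzkin i * Ms (n - i))

/-! ### Support lemmas -/

lemma lnc_supp {a b : ℕ} {σ : ℕ → ℕ} (h : σ ∈ LNC a b) (x : ℕ) :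
    σ x = x ∨ (a ≤ x ∧ x < b ∧ a ≤ σ x ∧ σ x < b) := by
  obtain ⟨hi, hlo, hhi, _⟩ := h
  by_cases h1 : a ≤ x ∧ x < b
  · by_cases h2 : a ≤ σ x ∧ σ x < b
    · exact Or.inr ⟨h1.1, h1.2, h2.1, h2.2⟩
    · left
      rcases not_and_or.mp h2 with h2 | h2
      · have e1 := hlo (σ x) (by omega)
        have e2 := hi x
        omega
      · have e1 := hhi (σ x) (by omega)
        have e2 := hi x
        omega
  · rcases not_and_or.mp h1 with h1 | h1
    · exact Or.inl (hlo x (by omega))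
    · exact Or.inl (hhi x (by omega))

lemma cs_supp {a b n : ℕ} {σ : ℕ → ℕ} (h : σ ∈ CS a b n) (x : ℕ) :
    σ x = x ∨ (((a ≤ x ∧ x < b) ∨ (a + n ≤ x ∧ x < b + n)) ∧
      ((a ≤ σ x ∧ σ x < b) ∨ (a + n ≤ σ x ∧ σ x < b + n))) := by
  obtain ⟨hi, hlo, hmid, hhi, _, _⟩ := h
  have hfix : ∀ y, ¬((a ≤ y ∧ y < b) ∨ (a + n ≤ y ∧ y < b + n)) → σ y = y := by
    intro y hy
    rcases Nat.lt_or_ge y a with h1 | h1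
    · exact hlo y h1
    rcases Nat.lt_or_ge y (b + n) with h2 | h2
    · exact hmid y (by omega) (by omega)
    · exact hhi y h2
  by_cases h1 : (a ≤ x ∧ x < b) ∨ (a + n ≤ x ∧ x < b + n)
  · by_cases h2 : (a ≤ σ x ∧ σ x < b) ∨ (a + n ≤ σ x ∧ σ x < b + n)
    · exact Or.inr ⟨h1, h2⟩
    · have e1 := hfix _ h2
      have e2 := hi x
      left; omega
  · exact Or.inl (hfix x h1)

/-! ### Separation lemmas, linear case -/

lemma lnc_sep {a b c : ℕ} {σ : ℕ → ℕ} (h : σ ∈ LNC a b) (hc : σ a = c)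
    (hac : a < c) (x : ℕ) (hax : a < x) (hxc : x < c) : a < σ x ∧ σ x < c := by
  have hinv := h.1
  have hN := h.2.2.2
  have e1 : σ (σ x) = x := hinv x
  have hca : σ c = a := by rw [← hc]; exact hinv a
  rcases lnc_supp h x with he | ⟨_, _, h3, h4⟩
  · omega
  · have hna : σ x ≠ a := by intro hh; rw [hh, hc] at e1; omega
    have hnc : σ x ≠ c := by intro hh; rw [hh, hca] at e1; omega
    have hlt : ¬ c < σ x := fun hlt => hN ⟨a, x, hax, by omega, by omega⟩
    omega

lemma lnc_sep_out {a b c : ℕ} {σ : ℕ → ℕ} (h : σ ∈ LNC a b) (hc : σ a = c)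
    (hac : a < c) (x : ℕ) (hcx : c < x) (hxb : x < b) : c < σ x ∧ σ x < b := by
  have hinv := h.1
  have hN := h.2.2.2
  have e1 : σ (σ x) = x := hinv x
  have hca : σ c = a := by rw [← hc]; exact hinv a
  rcases lnc_supp h x with he | ⟨_, _, h3, h4⟩
  · omega
  · have hna : σ x ≠ a := by intro hh; rw [hh, hc] at e1; omega
    have hnc : σ x ≠ c := by intro hh; rw [hh, hca] at e1; omega
    have hlt : ¬ (a < σ x ∧ σ x < c) := by
      rintro ⟨u, v⟩
      exact hN ⟨a, σ x, u, by omega, by omega⟩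
    omega

lemma lnc_cases {a b : ℕ} {σ : ℕ → ℕ} (h : σ ∈ LNC a b) (hab : a < b) :
    σ a = a ∨ (a < σ a ∧ σ a < b) := by
  rcases lnc_supp h a with he | ⟨_, _, h3, h4⟩
  · omega
  · omega

/-! ### Separation lemmas, circular case -/

section CSsep

variable {a b n c : ℕ} {σ : ℕ → ℕ}

lemma cs_cases (h : σ ∈ CS a b n) (hab : a < b) (hbn : b ≤ n) :
    σ a = a ∨ σ a = a + n ∨ (a < σ a ∧ σ a < b) ∨ (a + n < σ a ∧ σ a < b + n) := by
  rcases cs_supp h a with he | ⟨_, h2⟩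
  · omega
  · omega

lemma cs_sep_low (h : σ ∈ CS a b n) (hab : a < b) (hbn : b ≤ n) (hc : σ a = c)
    (hac : a < c) (hcb : c < b) :
    (∀ x, a < x → x < c → a < σ x ∧ σ x < c) ∧
    (∀ x, a + n < x → x < c + n → a + n < σ x ∧ σ x < c + n) ∧
    (∀ x, c < x → x < b → (c < σ x ∧ σ x < b) ∨ (c + n < σ x ∧ σ x < b + n)) ∧
    (∀ x, c + n < x → x < b + n → (c < σ x ∧ σ x < b) ∨ (c + n < σ x ∧ σ x < b + n)) := by
  obtain ⟨hinv, hlo, hmid, hhi, hN, hsym⟩ := h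
  have h' : σ ∈ CS a b n := ⟨hinv, hlo, hmid, hhi, hN, hsym⟩
  have hca : σ c = a := by rw [← hc]; exact hinv a
  have hA : σ (a + n) = c + n := by
    have := hsym a (by omega); rw [hc] at this; rw [this, if_pos (by omega)]
  have hC : σ (c + n) = a + n := by
    have := hsym c (by omega); rw [hca] at this; rw [this, if_pos (by omega)]
  have part1 : ∀ x, a < x → x < c → a < σ x ∧ σ x < c := by
    intro x h1 h2
    have e1 : σ (σ x) = x := hinv x
    rcases cs_supp h' x with he | ⟨_, hx2⟩
    · omega
    · have hna : σ x ≠ a := by intro hh; rw [hh, hc] at e1; omega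
      have hnc : σ x ≠ c := by intro hh; rw [hh, hca] at e1; omega
      have hgt : ¬ c < σ x := fun hg => hN ⟨a, x, by omega, by omega, by omega⟩
      omega
  have part2 : ∀ x, a + n < x → x < c + n → a + n < σ x ∧ σ x < c + n := by
    intro x h1 h2
    have e := hsym (x - n) (by omega)
    have hx : x - n + n = x := by omega
    rw [hx] at e
    have := part1 (x - n) (by omega) (by omega)
    rw [e, if_pos (by omega)]
    omega
  have part3 : ∀ x, c < x → x < b → (c < σ x ∧ σ x < b) ∨ (c + n < σ x ∧ σ x < b + n) := by
    intro x h1 h2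
    have e1 : σ (σ x) = x := hinv x
    rcases cs_supp h' x with he | ⟨_, hx2⟩
    · omega
    · have hna : σ x ≠ a := by intro hh; rw [hh, hc] at e1; omega
      have hnc : σ x ≠ c := by intro hh; rw [hh, hca] at e1; omega
      have hnan : σ x ≠ a + n := by intro hh; rw [hh, hA] at e1; omega
      have hncn : σ x ≠ c + n := by intro hh; rw [hh, hC] at e1; omega
      have hmid1 : ¬ (a < σ x ∧ σ x < c) := by
        rintro ⟨u, v⟩
        exact hN ⟨a, σ x, u, by omega, by omega⟩
      have hmid2 : ¬ (a + n < σ x ∧ σ x < c + n) := by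
        rintro ⟨u, v⟩
        have := part2 (σ x) u v
        omega
      omega
  have part4 : ∀ x, c + n < x → x < b + n →
      (c < σ x ∧ σ x < b) ∨ (c + n < σ x ∧ σ x < b + n) := by
    intro x h1 h2
    have e := hsym (x - n) (by omega)
    have hx : x - n + n = x := by omega
    rw [hx] at e
    have := part3 (x - n) (by omega) (by omega)
    rcases this with ⟨u, v⟩ | ⟨u, v⟩
    · rw [e, if_pos (by omega)]; omega
    · rw [e, if_neg (by omega)]; omega
  exact ⟨part1, part2, part3, part4⟩

lemma cs_sep_diam (h : σ ∈ CS a b n) (hab : a < b) (hbn : b ≤ n) (hc : σ a = a + n) :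
    (∀ x, a < x → x < b → a < σ x ∧ σ x < b) ∧
    (∀ x, a + n < x → x < b + n → a + n < σ x ∧ σ x < b + n) := by
  obtain ⟨hinv, hlo, hmid, hhi, hN, hsym⟩ := h
  have h' : σ ∈ CS a b n := ⟨hinv, hlo, hmid, hhi, hN, hsym⟩
  have hca : σ (a + n) = a := by rw [← hc]; exact hinv a
  have part1 : ∀ x, a < x → x < b → a < σ x ∧ σ x < b := by
    intro x h1 h2
    have e1 : σ (σ x) = x := hinv x
    rcases cs_supp h' x with he | ⟨_, hx2⟩
    · omega
    · have hna : σ x ≠ a := by intro hh; rw [hh, hc] at e1; omega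
      have hnan : σ x ≠ a + n := by intro hh; rw [hh, hca] at e1; omega
      have hgt : ¬ a + n < σ x := fun hg => hN ⟨a, x, by omega, by omega, by omega⟩
      omega
  have part2 : ∀ x, a + n < x → x < b + n → a + n < σ x ∧ σ x < b + n := by
    intro x h1 h2
    have e := hsym (x - n) (by omega)
    have hx : x - n + n = x := by omega
    rw [hx] at e
    have := part1 (x - n) (by omega) (by omega)
    rw [e, if_pos (by omega)]
    omega
  exact ⟨part1, part2⟩

lemma cs_sep_high (h : σ ∈ CS a b n) (hab : a < b) (hbn : b ≤ n) (hc : σ a = c + n)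
    (hac : a < c) (hcb : c < b) :
    (∀ x, c < x → x < b → c < σ x ∧ σ x < b) ∧
    (∀ x, a < x → x < c → (a < σ x ∧ σ x < c) ∨ (a + n < σ x ∧ σ x < c + n)) ∧
    (∀ x, a + n < x → x < c + n → (a < σ x ∧ σ x < c) ∨ (a + n < σ x ∧ σ x < c + n)) ∧
    (∀ x, c + n < x → x < b + n → c + n < σ x ∧ σ x < b + n) ∧
    (∀ x, a < x → x < c → σ (x + n) = if σ x < c then σ x + n else σ x - n) := by
  obtain ⟨hinv, hlo, hmid, hhi, hN, hsym⟩ := h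
  have h' : σ ∈ CS a b n := ⟨hinv, hlo, hmid, hhi, hN, hsym⟩
  have hcn : σ (c + n) = a := by rw [← hc]; exact hinv a
  have haN : σ (a + n) = c := by
    have := hsym a (by omega); rw [hc, if_neg (by omega)] at this
    rw [this]; omega
  have hcc : σ c = a + n := by rw [← haN]; exact hinv (a + n)
  have part1 : ∀ x, c < x → x < b → c < σ x ∧ σ x < b := by
    intro x h1 h2
    have e1 : σ (σ x) = x := hinv x
    rcases cs_supp h' x with he | ⟨_, hx2⟩
    · omega
    · have hna : σ x ≠ a := by intro hh; rw [hh, hc] at e1; omega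
      have hnc : σ x ≠ c := by intro hh; rw [hh, hcc] at e1; omega
      have hnan : σ x ≠ a + n := by intro hh; rw [hh, haN] at e1; omega
      have hncn : σ x ≠ c + n := by intro hh; rw [hh, hcn] at e1; omega
      have hx1 : ¬ c + n < σ x := fun hg => hN ⟨a, x, by omega, by omega, by omega⟩
      have hx2' : ¬ (a + n < σ x ∧ σ x < c + n) := by
        rintro ⟨u, v⟩
        exact hN ⟨c, x, by omega, by omega, by omega⟩
      have hx3 : ¬ (a < σ x ∧ σ x < c) := by
        rintro ⟨u, v⟩
        exact hN ⟨σ x, c, by omega, by omega, by omega⟩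
      omega
  have part2 : ∀ x, a < x → x < c → (a < σ x ∧ σ x < c) ∨ (a + n < σ x ∧ σ x < c + n) := by
    intro x h1 h2
    have e1 : σ (σ x) = x := hinv x
    rcases cs_supp h' x with he | ⟨_, hx2⟩
    · omega
    · have hna : σ x ≠ a := by intro hh; rw [hh, hc] at e1; omega
      have hnc : σ x ≠ c := by intro hh; rw [hh, hcc] at e1; omega
      have hnan : σ x ≠ a + n := by intro hh; rw [hh, haN] at e1; omega
      have hncn : σ x ≠ c + n := by intro hh; rw [hh, hcn] at e1; omega
      have hout : ¬ (c < σ x ∧ σ x < b) := by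
        rintro ⟨u, v⟩
        have := part1 (σ x) u v
        omega
      have hup : ¬ c + n < σ x := fun hg => hN ⟨a, x, by omega, by omega, by omega⟩
      omega
  have part3 : ∀ x, a + n < x → x < c + n →
      (a < σ x ∧ σ x < c) ∨ (a + n < σ x ∧ σ x < c + n) := by
    intro x h1 h2
    have e := hsym (x - n) (by omega)
    have hx : x - n + n = x := by omega
    rw [hx] at e
    have := part2 (x - n) (by omega) (by omega)
    rcases this with ⟨u, v⟩ | ⟨u, v⟩
    · rw [e, if_pos (by omega)]; omega
    · rw [e, if_neg (by omega)]; omega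
  have part4 : ∀ x, c + n < x → x < b + n → c + n < σ x ∧ σ x < b + n := by
    intro x h1 h2
    have e := hsym (x - n) (by omega)
    have hx : x - n + n = x := by omega
    rw [hx] at e
    have := part1 (x - n) (by omega) (by omega)
    rw [e, if_pos (by omega)]
    omega
  have part5 : ∀ x, a < x → x < c → σ (x + n) = if σ x < c then σ x + n else σ x - n := by
    intro x h1 h2
    have e := hsym x (by omega)
    have := part2 x h1 h2
    rcases this with ⟨u, v⟩ | ⟨u, v⟩
    · rw [e, if_pos (by omega), if_pos (by omega)]
    · rw [e, if_neg (by omega), if_neg (by omega)]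
  exact ⟨part1, part2, part3, part4, part5⟩

end CSsep

/-! ### Restrictions -/

def resf (lo hi : ℕ) (σ : ℕ → ℕ) : ℕ → ℕ := fun x => if lo < x ∧ x < hi then σ x else x

def cresf (lo hi n : ℕ) (σ : ℕ → ℕ) : ℕ → ℕ :=
  fun x => if (lo < x ∧ x < hi) ∨ (lo + n < x ∧ x < hi + n) then σ x else x

lemma resf_mem {lo hi : ℕ} {σ : ℕ → ℕ} (hinv : Function.Involutive σ) (hN : NoCross σ)
    (hmap : ∀ x, lo < x → x < hi → lo < σ x ∧ σ x < hi) :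
    resf lo hi σ ∈ LNC (lo + 1) hi := by
  refine ⟨?_, ?_, ?_, ?_⟩
  · intro x
    simp only [resf]
    by_cases hx : lo < x ∧ x < hi
    · have hm := hmap x hx.1 hx.2
      simp only [if_pos hx, if_pos (show lo < σ x ∧ σ x < hi from ⟨hm.1, hm.2⟩)]
      exact hinv x
    · simp only [if_neg hx]
  · intro x hx
    simp only [resf]
    rw [if_neg (by omega)]
  · intro x hx
    simp only [resf]
    rw [if_neg (by omega)]
  · rintro ⟨i, j, h1, h2, h3⟩
    simp only [resf] at h2 h3
    split_ifs at h2 h3 with hI hJ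
    all_goals first | omega | exact hN ⟨i, j, h1, h2, h3⟩

lemma cresf_mem {lo hi n : ℕ} {σ : ℕ → ℕ} (hinv : Function.Involutive σ) (hN : NoCross σ)
    (hn : hi ≤ n)
    (hmap : ∀ x, lo < x → x < hi → (lo < σ x ∧ σ x < hi) ∨ (lo + n < σ x ∧ σ x < hi + n))
    (hmap2 : ∀ x, lo + n < x → x < hi + n →
      (lo < σ x ∧ σ x < hi) ∨ (lo + n < σ x ∧ σ x < hi + n))
    (hsym : ∀ x, lo < x → x < hi → σ (x + n) = if σ x < hi then σ x + n else σ x - n) :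
    cresf lo hi n σ ∈ CS (lo + 1) hi n := by
  refine ⟨?_, ?_, ?_, ?_, ?_, ?_⟩
  · intro x
    simp only [cresf]
    by_cases hx : (lo < x ∧ x < hi) ∨ (lo + n < x ∧ x < hi + n)
    · have hm : (lo < σ x ∧ σ x < hi) ∨ (lo + n < σ x ∧ σ x < hi + n) := by
        rcases hx with hx | hx
        · exact hmap x hx.1 hx.2
        · exact hmap2 x hx.1 hx.2
      simp only [if_pos hx, if_pos hm]
      exact hinv x
    · simp only [if_neg hx]
  · intro x hx
    simp only [cresf]
    rw [if_neg (by omega)]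
  · intro x hx1 hx2
    simp only [cresf]
    rw [if_neg (by omega)]
  · intro x hx
    simp only [cresf]
    rw [if_neg (by omega)]
  · rintro ⟨i, j, h1, h2, h3⟩
    simp only [cresf] at h2 h3
    split_ifs at h2 h3 with hI hJ
    all_goals first | omega | exact hN ⟨i, j, h1, h2, h3⟩
  · intro x hx
    simp only [cresf]
    by_cases hlx : lo < x
    · have e1 : (if (lo < x ∧ x < hi) ∨ (lo + n < x ∧ x < hi + n) then σ x else x) = σ x :=
        if_pos (Or.inl ⟨hlx, hx⟩)
      have e2 : (if (lo < x + n ∧ x + n < hi) ∨ (lo + n < x + n ∧ x + n < hi + n)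
          then σ (x + n) else x + n) = σ (x + n) := if_pos (Or.inr ⟨by omega, by omega⟩)
      simp only [e1, e2]
      exact hsym x hlx hx
    · have e1 : (if (lo < x ∧ x < hi) ∨ (lo + n < x ∧ x < hi + n) then σ x else x) = x :=
        if_neg (by omega)
      have e2 : (if (lo < x + n ∧ x + n < hi) ∨ (lo + n < x + n ∧ x + n < hi + n)
          then σ (x + n) else x + n) = x + n := if_neg (by omega)
      simp only [e1, e2, if_pos hx]

/-! ### Trivial cases and fixed-point fibers -/

lemma id_mem_lnc {a b : ℕ} : id ∈ LNC a b :=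
  ⟨fun _ => rfl, fun _ _ => rfl, fun _ _ => rfl, by rintro ⟨i, j, h1, h2, h3⟩; simp at h2 h3; omega⟩

lemma id_mem_cs {a b n : ℕ} : id ∈ CS a b n := by
  refine ⟨fun _ => rfl, fun _ _ => rfl, fun _ _ _ => rfl, fun _ _ => rfl,
    by rintro ⟨i, j, h1, h2, h3⟩; simp at h2 h3; omega, ?_⟩
  intro x hx
  simp only [id]
  rw [if_pos hx]

lemma lnc_triv {a b : ℕ} (hba : b ≤ a) : LNC a b = {id} := by
  ext σ
  simp only [Set.mem_singleton_iff]
  constructor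
  · rintro ⟨hinv, hlo, hhi, hN⟩
    funext x
    rcases Nat.lt_or_ge x a with h | h
    · exact hlo x h
    · exact hhi x (by omega)
  · rintro rfl; exact id_mem_lnc

lemma cs_triv {a n : ℕ} : CS a a n = {id} := by
  ext σ
  simp only [Set.mem_singleton_iff]
  constructor
  · rintro ⟨hinv, hlo, hmid, hhi, hN, hsym⟩
    funext x
    rcases Nat.lt_or_ge x a with h | h
    · exact hlo x h
    rcases Nat.lt_or_ge x (a + n) with h2 | h2
    · exact hmid x (by omega) h2
    · exact hhi x (by omega)
  · rintro rfl; exact id_mem_cs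

lemma lnc_fix_eq (a b : ℕ) : {σ | σ ∈ LNC a b ∧ σ a = a} = LNC (a + 1) b := by
  ext σ
  constructor
  · rintro ⟨⟨hinv, hlo, hhi, hN⟩, hfa⟩
    refine ⟨hinv, fun x hx => ?_, hhi, hN⟩
    rcases Nat.lt_or_ge x a with h | h
    · exact hlo x h
    · have : x = a := by omega
      rw [this]; exact hfa
  · rintro ⟨hinv, hlo, hhi, hN⟩
    have hfa : σ a = a := hlo a (by omega)
    exact ⟨⟨hinv, fun x hx => hlo x (by omega), hhi, hN⟩, hfa⟩

lemma cs_fix_eq {a b n : ℕ} (hab : a < b) (hbn : b ≤ n) :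
    {σ | σ ∈ CS a b n ∧ σ a = a} = CS (a + 1) b n := by
  ext σ
  constructor
  · rintro ⟨⟨hinv, hlo, hmid, hhi, hN, hsym⟩, hfa⟩
    have hAn : σ (a + n) = a + n := by
      have := hsym a (by omega)
      rw [hfa, if_pos (by omega)] at this
      exact this
    refine ⟨hinv, fun x hx => ?_, fun x hx1 hx2 => ?_, hhi, hN, hsym⟩
    · rcases Nat.lt_or_ge x a with h | h
      · exact hlo x h
      · have : x = a := by omega
        rw [this]; exact hfa
    · rcases Nat.lt_or_ge x (a + n) with h | h
      · exact hmid x hx1 h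
      · have : x = a + n := by omega
        rw [this]; exact hAn
  · rintro ⟨hinv, hlo, hmid, hhi, hN, hsym⟩
    have hfa : σ a = a := hlo a (by omega)
    refine ⟨⟨hinv, fun x hx => hlo x (by omega), fun x hx1 hx2 => hmid x hx1 (by omega),
      hhi, hN, hsym⟩, hfa⟩

/-! ### Linear glue -/

def glueL (a c : ℕ) (τ1 τ2 : ℕ → ℕ) (x : ℕ) : ℕ :=
  if x = a then c else if x = c then a else if a < x ∧ x < c then τ1 x else τ2 x

section GlueL

variable {a b c : ℕ} {τ1 τ2 : ℕ → ℕ}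

lemma glueL_a (hac : a < c) : glueL a c τ1 τ2 a = c := by
  unfold glueL; rw [if_pos rfl]

lemma glueL_c (hac : a < c) : glueL a c τ1 τ2 c = a := by
  unfold glueL; rw [if_neg (by omega), if_pos rfl]

lemma glueL_in {x : ℕ} (h1 : a < x) (h2 : x < c) : glueL a c τ1 τ2 x = τ1 x := by
  unfold glueL; rw [if_neg (by omega), if_neg (by omega), if_pos ⟨h1, h2⟩]

lemma glueL_out {x : ℕ} (hac : a < c) (h : x < a ∨ c < x) : glueL a c τ1 τ2 x = τ2 x := by
  unfold glueL
  rw [if_neg (show ¬x = a by omega), if_neg (show ¬x = c by omega),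
    if_neg (show ¬(a < x ∧ x < c) by omega)]

lemma glueL_mem (h1 : τ1 ∈ LNC (a + 1) c) (h2 : τ2 ∈ LNC (c + 1) b)
    (hac : a < c) (hcb : c < b) : glueL a c τ1 τ2 ∈ LNC a b := by
  obtain ⟨inv1, lo1, hi1, N1⟩ := h1
  obtain ⟨inv2, lo2, hi2, N2⟩ := h2
  have h1' : τ1 ∈ LNC (a + 1) c := ⟨inv1, lo1, hi1, N1⟩
  have h2' : τ2 ∈ LNC (c + 1) b := ⟨inv2, lo2, hi2, N2⟩
  refine ⟨?_, ?_, ?_, ?_⟩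
  · intro x
    rcases eq_or_ne x a with rfl | hxa
    · rw [glueL_a hac, glueL_c hac]
    rcases eq_or_ne x c with rfl | hxc
    · rw [glueL_c hac, glueL_a hac]
    by_cases hx : a < x ∧ x < c
    · rw [glueL_in hx.1 hx.2]
      rcases lnc_supp h1' x with he | ⟨u1, u2, u3, u4⟩
      · rw [he, glueL_in hx.1 hx.2, he]
      · rw [glueL_in (by omega) (by omega)]
        exact inv1 x
    · rw [glueL_out hac (by omega : x < a ∨ c < x)]
      rcases lnc_supp h2' x with he | ⟨u1, u2, u3, u4⟩
      · rw [he, glueL_out hac (by omega : x < a ∨ c < x), he]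
      · rw [glueL_out hac (by omega : τ2 x < a ∨ c < τ2 x)]
        exact inv2 x
  · intro x hx
    rw [glueL_out hac (by omega)]
    exact lo2 x (by omega)
  · intro x hx
    rw [glueL_out hac (by omega)]
    exact hi2 x (by omega)
  · rintro ⟨i, j, hij, h2, h3⟩
    have r1i := lnc_supp h1' i
    have r1j := lnc_supp h1' j
    have r2i := lnc_supp h2' i
    have r2j := lnc_supp h2' j
    unfold glueL at h2 h3
    split_ifs at h2 h3
    all_goals first
      | omega
      | exact N1 ⟨i, j, hij, h2, h3⟩
      | exact N2 ⟨i, j, hij, h2, h3⟩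

end GlueL

/-! ### ncard helpers -/

lemma ncard_eq_of_equiv {A B : Set (ℕ → ℕ)} (e : ↥A ≃ ↥B) : A.ncard = B.ncard := by
  rw [← Nat.card_coe_set_eq, ← Nat.card_coe_set_eq]
  exact Nat.card_congr e

lemma ncard_eq_of_equiv_prod {A B C : Set (ℕ → ℕ)} (e : ↥A ≃ ↥B × ↥C) :
    A.ncard = B.ncard * C.ncard := by
  rw [← Nat.card_coe_set_eq, ← Nat.card_coe_set_eq, ← Nat.card_coe_set_eq]
  rw [Nat.card_congr e, Nat.card_prod]

/-! ### The linear fiber equivalence -/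

def lncFiber (a b v : ℕ) : Set (ℕ → ℕ) := {σ | σ ∈ LNC a b ∧ σ a = v}

noncomputable def lncFiberEquiv (a b c : ℕ) (hac : a < c) (hcb : c < b) :
    ↥(lncFiber a b c) ≃ ↥(LNC (a + 1) c) × ↥(LNC (c + 1) b) where
  toFun σ := ⟨⟨resf a c σ.1, resf_mem σ.2.1.1 σ.2.1.2.2.2 (lnc_sep σ.2.1 σ.2.2 hac)⟩,
    ⟨resf c b σ.1, resf_mem σ.2.1.1 σ.2.1.2.2.2 (lnc_sep_out σ.2.1 σ.2.2 hac)⟩⟩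
  invFun τ := ⟨glueL a c τ.1.1 τ.2.1, glueL_mem τ.1.2 τ.2.2 hac hcb, glueL_a hac⟩
  left_inv := by
    rintro ⟨σ, hσ, hv⟩
    apply Subtype.ext
    funext x
    show glueL a c (resf a c σ) (resf c b σ) x = σ x
    rcases eq_or_ne x a with rfl | hxa
    · rw [glueL_a hac, hv]
    rcases eq_or_ne x c with he | hxc
    · rw [he, glueL_c hac]
      have h3 : σ c = a := by rw [← hv]; exact hσ.1 a
      omega
    by_cases hx : a < x ∧ x < c
    · rw [glueL_in hx.1 hx.2]
      simp only [resf]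
      rw [if_pos hx]
    · rw [glueL_out hac (by omega)]
      simp only [resf]
      by_cases hx2 : c < x ∧ x < b
      · rw [if_pos hx2]
      · rw [if_neg hx2]
        rcases lnc_supp hσ x with he | hb <;> omega
  right_inv := by
    rintro ⟨⟨τ1, h1⟩, ⟨τ2, h2⟩⟩
    have e1 : resf a c (glueL a c τ1 τ2) = τ1 := by
      funext x
      simp only [resf]
      by_cases hx : a < x ∧ x < c
      · rw [if_pos hx, glueL_in hx.1 hx.2]
      · rw [if_neg hx]
        rcases Nat.lt_or_ge x (a + 1) with h | h
        · exact (h1.2.1 x h).symm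
        · exact (h1.2.2.1 x (by omega)).symm
    have e2 : resf c b (glueL a c τ1 τ2) = τ2 := by
      funext x
      simp only [resf]
      by_cases hx : c < x ∧ x < b
      · rw [if_pos hx, glueL_out hac (by omega)]
      · rw [if_neg hx]
        rcases Nat.lt_or_ge x (c + 1) with h | h
        · exact (h2.2.1 x h).symm
        · exact (h2.2.2.1 x (by omega)).symm
    exact Prod.ext (Subtype.ext e1) (Subtype.ext e2)

/-! ### Counting linear noncrossing matchings -/

lemma lnc_decomp {a b : ℕ} (hab : a < b) :
    LNC a b = ⋃ v ∈ insert a (Finset.Ioo a b), lncFiber a b v := by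
  ext σ
  simp only [Set.mem_iUnion, lncFiber]
  constructor
  · intro hσ
    rcases lnc_cases hσ hab with h | h
    · exact ⟨a, Finset.mem_insert_self _ _, hσ, h⟩
    · exact ⟨σ a, Finset.mem_insert_of_mem (Finset.mem_Ioo.mpr ⟨h.1, h.2⟩), hσ, rfl⟩
  · rintro ⟨v, _, hσ, _⟩
    exact hσ

lemma sum_Ioo_reindex (f g : ℕ → ℕ) (a b : ℕ) :
    ∑ c ∈ Finset.Ioo a b, f (c - a - 1) * g (b - c - 1) =
      ∑ i ∈ Finset.range (b - a - 1), f i * g (b - a - 2 - i) := by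
  refine Finset.sum_nbij' (fun c => c - a - 1) (fun i => a + 1 + i) ?_ ?_ ?_ ?_ ?_
  · intro c hc
    simp only [Finset.mem_Ioo] at hc
    simp only [Finset.mem_range]
    omega
  · intro i hi
    simp only [Finset.mem_range] at hi
    simp only [Finset.mem_Ioo]
    omega
  · intro c hc
    simp only [Finset.mem_Ioo] at hc
    omega
  · intro i hi
    simp only [Finset.mem_range] at hi
    omega
  · intro c hc
    simp only [Finset.mem_Ioo] at hc
    congr 2
    omega

lemma lnc_ncard : ∀ m a b : ℕ, b - a ≤ m → (LNC a b).ncard = motzkin (b - a) := by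
  intro m
  induction m with
  | zero =>
    intro a b h
    have hba : b ≤ a := by omega
    rw [lnc_triv hba, Set.ncard_singleton, show b - a = 0 by omega, motzkin]
  | succ m ih =>
    intro a b h
    rcases Nat.lt_or_ge a b with hab | hba
    · -- a < b
      rw [lnc_decomp hab]
      rw [ncard_biUnion _ _ (fun v _ => (lnc_finite a b).subset (fun σ hσ => hσ.1))
          (fun v _ w _ hvw => by
            rw [Set.disjoint_left]
            rintro σ ⟨h1, h2⟩ ⟨h3, h4⟩
            exact hvw (h2 ▸ h4 ▸ rfl))]
      rw [Finset.sum_insert (by simp)]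
      have hfix : (lncFiber a b a).ncard = motzkin (b - a - 1) := by
        have : lncFiber a b a = LNC (a + 1) b := lnc_fix_eq a b
        rw [this, ih (a + 1) b (by omega)]
        congr 1
      have hfib : ∀ c ∈ Finset.Ioo a b,
          (lncFiber a b c).ncard = motzkin (c - a - 1) * motzkin (b - c - 1) := by
        intro c hc
        simp only [Finset.mem_Ioo] at hc
        rw [ncard_eq_of_equiv_prod (lncFiberEquiv a b c hc.1 hc.2)]
        rw [ih (a + 1) c (by omega), ih (c + 1) b (by omega)]
        congr 2 <;> omega
      rw [hfix, Finset.sum_congr rfl hfib, sum_Ioo_reindex]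
      rw [motzkin_rec (b - a) (by omega)]
    · rw [lnc_triv hba, Set.ncard_singleton, show b - a = 0 by omega, motzkin]

/-! ### Circular glue: diameter case -/

def glueD (a b n : ℕ) (τ : ℕ → ℕ) (x : ℕ) : ℕ :=
  if x = a then a + n else if x = a + n then a
  else if a + n < x ∧ x < b + n then τ (x - n) + n else τ x

section GlueD

variable {a b n : ℕ} {τ : ℕ → ℕ}

lemma glueD_a (hn : 0 < n) : glueD a b n τ a = a + n := by
  unfold glueD; rw [if_pos rfl]

lemma glueD_an (hn : 0 < n) : glueD a b n τ (a + n) = a := by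
  unfold glueD; rw [if_neg (by omega), if_pos rfl]

lemma glueD_copy {x : ℕ} (h1 : a + n < x) (h2 : x < b + n) (hab : a < b) (hbn : b ≤ n) :
    glueD a b n τ x = τ (x - n) + n := by
  unfold glueD
  rw [if_neg (by omega), if_neg (by omega), if_pos ⟨h1, h2⟩]

lemma glueD_out {x : ℕ} (hab : a < b) (hbn : b ≤ n)
    (h : x ≠ a ∧ x ≠ a + n ∧ ¬(a + n < x ∧ x < b + n)) : glueD a b n τ x = τ x := by
  unfold glueD
  rw [if_neg h.1, if_neg h.2.1, if_neg h.2.2]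

lemma glueD_mem (hτ : τ ∈ LNC (a + 1) b) (hab : a < b) (hbn : b ≤ n) :
    glueD a b n τ ∈ CS a b n := by
  obtain ⟨inv1, lo1, hi1, N1⟩ := hτ
  have hτ' : τ ∈ LNC (a + 1) b := ⟨inv1, lo1, hi1, N1⟩
  have hn : 0 < n := by omega
  refine ⟨?_, ?_, ?_, ?_, ?_, ?_⟩
  · -- involutive
    intro x
    rcases eq_or_ne x a with rfl | hxa
    · rw [glueD_a hn, glueD_an hn]
    rcases eq_or_ne x (a + n) with he | hxan
    · rw [he, glueD_an hn, glueD_a hn]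
    by_cases hx : a + n < x ∧ x < b + n
    · rw [glueD_copy hx.1 hx.2 hab hbn]
      rcases lnc_supp hτ' (x - n) with he | ⟨u1, u2, u3, u4⟩
      · rw [he, show x - n + n = x by omega, glueD_copy hx.1 hx.2 hab hbn, he,
          show x - n + n = x by omega]
      · rw [glueD_copy (by omega) (by omega) hab hbn,
          show τ (x - n) + n - n = τ (x - n) by omega, inv1 (x - n)]
        omega
    · rw [glueD_out hab hbn ⟨hxa, hxan, hx⟩]
      rcases lnc_supp hτ' x with he | ⟨u1, u2, u3, u4⟩
      · rw [he, glueD_out hab hbn ⟨hxa, hxan, hx⟩, he]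
      · rw [glueD_out hab hbn ⟨by omega, by omega, by omega⟩]
        exact inv1 x
  · intro x hx
    rw [glueD_out hab hbn ⟨by omega, by omega, by omega⟩]
    exact lo1 x (by omega)
  · intro x hx1 hx2
    rw [glueD_out hab hbn ⟨by omega, by omega, by omega⟩]
    exact hi1 x (by omega)
  · intro x hx
    rw [glueD_out hab hbn ⟨by omega, by omega, by omega⟩]
    exact hi1 x (by omega)
  · -- NoCross
    rintro ⟨i, j, hij, h2, h3⟩
    have ri := lnc_supp hτ' i
    have rj := lnc_supp hτ' j
    have ri' := lnc_supp hτ' (i - n)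
    have rj' := lnc_supp hτ' (j - n)
    unfold glueD at h2 h3
    split_ifs at h2 h3
    all_goals first
      | omega
      | exact N1 ⟨i, j, hij, h2, h3⟩
      | exact N1 ⟨i - n, j - n, by omega, by omega, by omega⟩
  · -- csym
    intro x hx
    rcases eq_or_ne x a with rfl | hxa
    · rw [glueD_an hn, glueD_a hn, if_neg (by omega)]
      omega
    rcases Nat.lt_or_ge x a with hlt | hge
    · have e1 : glueD a b n τ x = x := by
        rw [glueD_out hab hbn ⟨by omega, by omega, by omega⟩]
        exact lo1 x (by omega)
      have e2 : glueD a b n τ (x + n) = x + n := by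
        rw [glueD_out hab hbn ⟨by omega, by omega, by omega⟩]
        exact hi1 (x + n) (by omega)
      rw [e1, e2, if_pos (by omega)]
    · -- a < x < b
      have hax : a < x := by omega
      have e1 : glueD a b n τ x = τ x := glueD_out hab hbn ⟨hxa, by omega, by omega⟩
      have hb : τ x < b := by
        rcases lnc_supp hτ' x with he | ⟨u1, u2, u3, u4⟩ <;> omega
      have e2 : glueD a b n τ (x + n) = τ (x + n - n) + n :=
        glueD_copy (by omega) (by omega) hab hbn
      rw [e1, e2, show x + n - n = x by omega, if_pos hb]

end GlueD

def csFiberD (a b n : ℕ) : Set (ℕ → ℕ) := {σ | σ ∈ CS a b n ∧ σ a = a + n}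

noncomputable def csFiberDEquiv (a b n : ℕ) (hab : a < b) (hbn : b ≤ n) :
    ↥(csFiberD a b n) ≃ ↥(LNC (a + 1) b) where
  toFun σ := ⟨resf a b σ.1,
    resf_mem σ.2.1.1 σ.2.1.2.2.2.2.1 (cs_sep_diam σ.2.1 hab hbn σ.2.2).1⟩
  invFun τ := ⟨glueD a b n τ.1, glueD_mem τ.2 hab hbn, by
    rw [glueD_a (by omega)]⟩
  left_inv := by
    rintro ⟨σ, hσ, hv⟩
    apply Subtype.ext
    funext x
    show glueD a b n (resf a b σ) x = σ x
    have hn : 0 < n := by omega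
    have hsep := (cs_sep_diam hσ hab hbn hv).1
    obtain ⟨hinv, hlo, hmid, hhi, hN, hsym⟩ := hσ
    rcases eq_or_ne x a with rfl | hxa
    · rw [glueD_a hn, hv]
    rcases eq_or_ne x (a + n) with he | hxan
    · rw [he, glueD_an hn]
      have : σ (a + n) = a := by rw [← hv]; exact hinv a
      omega
    by_cases hx : a + n < x ∧ x < b + n
    · rw [glueD_copy hx.1 hx.2 hab hbn]
      simp only [resf]
      rw [if_pos (by omega)]
      have e := hsym (x - n) (by omega)
      rw [show x - n + n = x by omega] at e
      have := hsep (x - n) (by omega) (by omega)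
      rw [e, if_pos (by omega)]
    · rw [glueD_out hab hbn ⟨hxa, hxan, hx⟩]
      simp only [resf]
      by_cases hx2 : a < x ∧ x < b
      · rw [if_pos hx2]
      · rw [if_neg hx2]
        rcases Nat.lt_or_ge x a with h | h
        · exact (hlo x h).symm
        rcases Nat.lt_or_ge x (a + n) with h2 | h2
        · exact (hmid x (by omega) h2).symm
        · exact (hhi x (by omega)).symm
  right_inv := by
    rintro ⟨τ, hτ⟩
    apply Subtype.ext
    funext x
    show resf a b (glueD a b n τ) x = τ x
    simp only [resf]
    by_cases hx : a < x ∧ x < b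
    · rw [if_pos hx, glueD_out hab hbn ⟨by omega, by omega, by omega⟩]
    · rw [if_neg hx]
      rcases Nat.lt_or_ge x (a + 1) with h | h
      · exact (hτ.2.1 x h).symm
      · exact (hτ.2.2.1 x (by omega)).symm

/-! ### Circular glue: low chord case -/

def glueLow (a c n : ℕ) (τ1 τo : ℕ → ℕ) (x : ℕ) : ℕ :=
  if x = a then c else if x = c then a
  else if x = a + n then c + n else if x = c + n then a + n
  else if a < x ∧ x < c then τ1 x
  else if a + n < x ∧ x < c + n then τ1 (x - n) + n
  else τo x

section GlueLow

variable {a b c n : ℕ} {τ1 τo : ℕ → ℕ}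

lemma glueLow_a (h1 : a < c) (h2 : c < b) (h3 : b ≤ n) : glueLow a c n τ1 τo a = c := by
  unfold glueLow; rw [if_pos rfl]

lemma glueLow_c (h1 : a < c) (h2 : c < b) (h3 : b ≤ n) : glueLow a c n τ1 τo c = a := by
  unfold glueLow; rw [if_neg (by omega), if_pos rfl]

lemma glueLow_an (h1 : a < c) (h2 : c < b) (h3 : b ≤ n) :
    glueLow a c n τ1 τo (a + n) = c + n := by
  unfold glueLow; rw [if_neg (by omega), if_neg (by omega), if_pos rfl]

lemma glueLow_cn (h1 : a < c) (h2 : c < b) (h3 : b ≤ n) :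
    glueLow a c n τ1 τo (c + n) = a + n := by
  unfold glueLow; rw [if_neg (by omega), if_neg (by omega), if_neg (by omega), if_pos rfl]

lemma glueLow_in {x : ℕ} (h1 : a < c) (h2 : c < b) (h3 : b ≤ n) (u1 : a < x) (u2 : x < c) :
    glueLow a c n τ1 τo x = τ1 x := by
  unfold glueLow
  rw [if_neg (by omega), if_neg (by omega), if_neg (by omega), if_neg (by omega),
    if_pos ⟨u1, u2⟩]

lemma glueLow_copy {x : ℕ} (h1 : a < c) (h2 : c < b) (h3 : b ≤ n)
    (u1 : a + n < x) (u2 : x < c + n) : glueLow a c n τ1 τo x = τ1 (x - n) + n := by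
  unfold glueLow
  rw [if_neg (by omega), if_neg (by omega), if_neg (by omega), if_neg (by omega),
    if_neg (by omega), if_pos ⟨u1, u2⟩]

lemma glueLow_out {x : ℕ} (h1 : a < c) (h2 : c < b) (h3 : b ≤ n)
    (u : x < a ∨ (c < x ∧ x < a + n) ∨ c + n < x) : glueLow a c n τ1 τo x = τo x := by
  unfold glueLow
  rw [if_neg (by omega), if_neg (by omega), if_neg (by omega), if_neg (by omega),
    if_neg (by omega), if_neg (by omega)]

set_option maxHeartbeats 1600000 in
lemma glueLow_mem (hτ1 : τ1 ∈ LNC (a + 1) c) (hτo : τo ∈ CS (c + 1) b n)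
    (h1 : a < c) (h2 : c < b) (h3 : b ≤ n) : glueLow a c n τ1 τo ∈ CS a b n := by
  obtain ⟨inv1, lo1, hi1, N1⟩ := hτ1
  have hτ1' : τ1 ∈ LNC (a + 1) c := ⟨inv1, lo1, hi1, N1⟩
  obtain ⟨invo, loo, mido, hio, No, symo⟩ := hτo
  have hτo' : τo ∈ CS (c + 1) b n := ⟨invo, loo, mido, hio, No, symo⟩
  refine ⟨?_, ?_, ?_, ?_, ?_, ?_⟩
  · -- involutive
    intro x
    rcases eq_or_ne x a with rfl | hxa
    · rw [glueLow_a h1 h2 h3, glueLow_c h1 h2 h3]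
    rcases eq_or_ne x c with rfl | hxc
    · rw [glueLow_c h1 h2 h3, glueLow_a h1 h2 h3]
    rcases eq_or_ne x (a + n) with rfl | hxan
    · rw [glueLow_an h1 h2 h3, glueLow_cn h1 h2 h3]
    rcases eq_or_ne x (c + n) with rfl | hxcn
    · rw [glueLow_cn h1 h2 h3, glueLow_an h1 h2 h3]
    by_cases hx : a < x ∧ x < c
    · rw [glueLow_in h1 h2 h3 hx.1 hx.2]
      rcases lnc_supp hτ1' x with he | ⟨u1, u2, u3, u4⟩
      · rw [he, glueLow_in h1 h2 h3 hx.1 hx.2, he]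
      · rw [glueLow_in h1 h2 h3 (by omega) (by omega)]
        exact inv1 x
    by_cases hx2 : a + n < x ∧ x < c + n
    · rw [glueLow_copy h1 h2 h3 hx2.1 hx2.2]
      rcases lnc_supp hτ1' (x - n) with he | ⟨u1, u2, u3, u4⟩
      · rw [he, show x - n + n = x by omega, glueLow_copy h1 h2 h3 hx2.1 hx2.2, he,
          show x - n + n = x by omega]
      · rw [glueLow_copy h1 h2 h3 (by omega) (by omega),
          show τ1 (x - n) + n - n = τ1 (x - n) by omega, inv1 (x - n)]
        omega
    · have ev : glueLow a c n τ1 τo x = τo x := glueLow_out h1 h2 h3 (by omega)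
      rw [ev]
      rcases cs_supp hτo' x with he | ⟨u1, u2⟩
      · rw [he, ev, he]
      · have ev2 : glueLow a c n τ1 τo (τo x) = τo (τo x) :=
          glueLow_out h1 h2 h3 (by omega)
        rw [ev2]
        exact invo x
  · intro x hx
    rw [glueLow_out h1 h2 h3 (by omega)]
    exact loo x (by omega)
  · intro x hx1 hx2
    rw [glueLow_out h1 h2 h3 (by omega)]
    exact mido x (by omega) (by omega)
  · intro x hx
    rw [glueLow_out h1 h2 h3 (by omega)]
    exact hio x (by omega)
  · -- NoCross
    rintro ⟨i, j, hij, hc2, hc3⟩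
    have r1i := lnc_supp hτ1' i
    have r1j := lnc_supp hτ1' j
    have r1i' := lnc_supp hτ1' (i - n)
    have r1j' := lnc_supp hτ1' (j - n)
    have roi := cs_supp hτo' i
    have roj := cs_supp hτo' j
    unfold glueLow at hc2 hc3
    split_ifs at hc2 hc3
    all_goals first
      | omega
      | exact N1 ⟨i, j, hij, hc2, hc3⟩
      | exact N1 ⟨i - n, j - n, by omega, by omega, by omega⟩
      | exact No ⟨i, j, hij, hc2, hc3⟩
  · -- csym
    intro x hx
    rcases eq_or_ne x a with rfl | hxa
    · rw [glueLow_a h1 h2 h3, glueLow_an h1 h2 h3, if_pos (by omega)]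
    rcases eq_or_ne x c with rfl | hxc
    · rw [glueLow_c h1 h2 h3, glueLow_cn h1 h2 h3, if_pos (by omega)]
    rcases Nat.lt_or_ge x a with hlt | hge
    · have e1 : glueLow a c n τ1 τo x = x := by
        rw [glueLow_out h1 h2 h3 (by omega)]
        exact loo x (by omega)
      have e2 : glueLow a c n τ1 τo (x + n) = x + n := by
        rw [glueLow_out h1 h2 h3 (by omega)]
        exact mido (x + n) (by omega) (by omega)
      rw [e1, e2, if_pos (by omega)]
    by_cases hax : a < x ∧ x < c
    · have e1 : glueLow a c n τ1 τo x = τ1 x := glueLow_in h1 h2 h3 hax.1 hax.2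
      have hb : τ1 x < c := by
        rcases lnc_supp hτ1' x with he | ⟨u1, u2, u3, u4⟩ <;> omega
      have e2 : glueLow a c n τ1 τo (x + n) = τ1 (x + n - n) + n :=
        glueLow_copy h1 h2 h3 (by omega) (by omega)
      rw [e1, e2, show x + n - n = x by omega, if_pos (by omega)]
    · -- c < x < b
      have hcx : c < x := by omega
      have e1 : glueLow a c n τ1 τo x = τo x :=
        glueLow_out h1 h2 h3 (by omega)
      have e2 : glueLow a c n τ1 τo (x + n) = τo (x + n) :=
        glueLow_out h1 h2 h3 (by omega)
      rw [e1, e2]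
      exact symo x hx

end GlueLow

def csFiberLow (a b n c : ℕ) : Set (ℕ → ℕ) := {σ | σ ∈ CS a b n ∧ σ a = c}

noncomputable def csFiberLowEquiv (a b c n : ℕ) (h1 : a < c) (h2 : c < b) (h3 : b ≤ n) :
    ↥(csFiberLow a b n c) ≃ ↥(LNC (a + 1) c) × ↥(CS (c + 1) b n) where
  toFun σ :=
    ⟨⟨resf a c σ.1,
      resf_mem σ.2.1.1 σ.2.1.2.2.2.2.1 (cs_sep_low σ.2.1 (by omega) h3 σ.2.2 h1 h2).1⟩,
     ⟨cresf c b n σ.1, by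
        obtain ⟨hσ, hv⟩ := σ.2
        have hsep := cs_sep_low hσ (by omega) h3 hv h1 h2
        exact cresf_mem hσ.1 hσ.2.2.2.2.1 h3 hsep.2.2.1 hsep.2.2.2
          (fun x u1 u2 => hσ.2.2.2.2.2 x (by omega))⟩⟩
  invFun τ := ⟨glueLow a c n τ.1.1 τ.2.1, glueLow_mem τ.1.2 τ.2.2 h1 h2 h3,
    glueLow_a h1 h2 h3⟩
  left_inv := by
    rintro ⟨σ, hσ, hv⟩
    apply Subtype.ext
    funext x
    show glueLow a c n (resf a c σ) (cresf c b n σ) x = σ x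
    have hsep := cs_sep_low hσ (by omega) h3 hv h1 h2
    obtain ⟨hinv, hlo, hmid, hhi, hN, hsym⟩ := hσ
    have hca : σ c = a := by rw [← hv]; exact hinv a
    have hA : σ (a + n) = c + n := by
      have := hsym a (by omega); rw [hv] at this; rw [this, if_pos (by omega)]
    have hC : σ (c + n) = a + n := by
      have := hsym c (by omega); rw [hca] at this; rw [this, if_pos (by omega)]
    rcases eq_or_ne x a with rfl | hxa
    · rw [glueLow_a h1 h2 h3, hv]
    rcases eq_or_ne x c with rfl | hxc
    · rw [glueLow_c h1 h2 h3, hca]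
    rcases eq_or_ne x (a + n) with rfl | hxan
    · rw [glueLow_an h1 h2 h3, hA]
    rcases eq_or_ne x (c + n) with rfl | hxcn
    · rw [glueLow_cn h1 h2 h3, hC]
    by_cases hx : a < x ∧ x < c
    · rw [glueLow_in h1 h2 h3 hx.1 hx.2]
      simp only [resf]
      rw [if_pos hx]
    by_cases hx2 : a + n < x ∧ x < c + n
    · rw [glueLow_copy h1 h2 h3 hx2.1 hx2.2]
      simp only [resf]
      rw [if_pos (by omega)]
      have e := hsym (x - n) (by omega)
      rw [show x - n + n = x by omega] at e
      have := hsep.1 (x - n) (by omega) (by omega)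
      rw [e, if_pos (by omega)]
    · rw [glueLow_out h1 h2 h3 (by omega)]
      simp only [cresf]
      by_cases hx3 : (c < x ∧ x < b) ∨ (c + n < x ∧ x < b + n)
      · rw [if_pos hx3]
      · rw [if_neg hx3]
        rcases Nat.lt_or_ge x a with h | h
        · exact (hlo x h).symm
        rcases Nat.lt_or_ge x (a + n) with h' | h'
        · exact (hmid x (by omega) h').symm
        · exact (hhi x (by omega)).symm
  right_inv := by
    rintro ⟨⟨τ1, hτ1⟩, ⟨τo, hτo⟩⟩
    have e1 : resf a c (glueLow a c n τ1 τo) = τ1 := by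
      funext x
      simp only [resf]
      by_cases hx : a < x ∧ x < c
      · rw [if_pos hx, glueLow_in h1 h2 h3 hx.1 hx.2]
      · rw [if_neg hx]
        rcases Nat.lt_or_ge x (a + 1) with h | h
        · exact (hτ1.2.1 x h).symm
        · exact (hτ1.2.2.1 x (by omega)).symm
    have e2 : cresf c b n (glueLow a c n τ1 τo) = τo := by
      funext x
      simp only [cresf]
      by_cases hx : (c < x ∧ x < b) ∨ (c + n < x ∧ x < b + n)
      · rw [if_pos hx, glueLow_out h1 h2 h3 (by omega)]
      · rw [if_neg hx]
        rcases Nat.lt_or_ge x (c + 1) with h | h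
        · exact (hτo.2.1 x h).symm
        rcases Nat.lt_or_ge x (b + n) with h' | h'
        · exact (hτo.2.2.1 x (by omega) (by omega)).symm
        · exact (hτo.2.2.2.1 x h').symm
    exact Prod.ext (Subtype.ext e1) (Subtype.ext e2)

/-! ### Circular glue: high chord case -/

def glueHigh (a b c n : ℕ) (τm τo : ℕ → ℕ) (x : ℕ) : ℕ :=
  if x = a then c + n else if x = c + n then a
  else if x = c then a + n else if x = a + n then c
  else if c < x ∧ x < b then τo x
  else if c + n < x ∧ x < b + n then τo (x - n) + n
  else τm x

section GlueHigh

variable {a b c n : ℕ} {τm τo : ℕ → ℕ}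

lemma glueHigh_a (h1 : a < c) (h2 : c < b) (h3 : b ≤ n) : glueHigh a b c n τm τo a = c + n := by
  unfold glueHigh; rw [if_pos rfl]

lemma glueHigh_cn (h1 : a < c) (h2 : c < b) (h3 : b ≤ n) :
    glueHigh a b c n τm τo (c + n) = a := by
  unfold glueHigh; rw [if_neg (by omega), if_pos rfl]

lemma glueHigh_c (h1 : a < c) (h2 : c < b) (h3 : b ≤ n) :
    glueHigh a b c n τm τo c = a + n := by
  unfold glueHigh; rw [if_neg (by omega), if_neg (by omega), if_pos rfl]

lemma glueHigh_an (h1 : a < c) (h2 : c < b) (h3 : b ≤ n) :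
    glueHigh a b c n τm τo (a + n) = c := by
  unfold glueHigh
  rw [if_neg (by omega), if_neg (by omega), if_neg (by omega), if_pos rfl]

lemma glueHigh_out {x : ℕ} (h1 : a < c) (h2 : c < b) (h3 : b ≤ n) (u1 : c < x) (u2 : x < b) :
    glueHigh a b c n τm τo x = τo x := by
  unfold glueHigh
  rw [if_neg (by omega), if_neg (by omega), if_neg (by omega), if_neg (by omega),
    if_pos ⟨u1, u2⟩]

lemma glueHigh_copy {x : ℕ} (h1 : a < c) (h2 : c < b) (h3 : b ≤ n)
    (u1 : c + n < x) (u2 : x < b + n) : glueHigh a b c n τm τo x = τo (x - n) + n := by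
  unfold glueHigh
  rw [if_neg (by omega), if_neg (by omega), if_neg (by omega), if_neg (by omega),
    if_neg (by omega), if_pos ⟨u1, u2⟩]

lemma glueHigh_mid {x : ℕ} (h1 : a < c) (h2 : c < b) (h3 : b ≤ n)
    (u : x < a ∨ (a < x ∧ x < c) ∨ (b ≤ x ∧ x < a + n) ∨ (a + n < x ∧ x < c + n) ∨ b + n ≤ x) :
    glueHigh a b c n τm τo x = τm x := by
  unfold glueHigh
  rw [if_neg (by omega), if_neg (by omega), if_neg (by omega), if_neg (by omega),
    if_neg (by omega), if_neg (by omega)]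

set_option maxHeartbeats 1600000 in
lemma glueHigh_mem (hτm : τm ∈ CS (a + 1) c n) (hτo : τo ∈ LNC (c + 1) b)
    (h1 : a < c) (h2 : c < b) (h3 : b ≤ n) : glueHigh a b c n τm τo ∈ CS a b n := by
  obtain ⟨invo, loo, hio, No⟩ := hτo
  have hτo' : τo ∈ LNC (c + 1) b := ⟨invo, loo, hio, No⟩
  obtain ⟨invm, lom, midm, him, Nm, symm_m⟩ := hτm
  have hτm' : τm ∈ CS (a + 1) c n := ⟨invm, lom, midm, him, Nm, symm_m⟩
  refine ⟨?_, ?_, ?_, ?_, ?_, ?_⟩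
  · -- involutive
    intro x
    rcases eq_or_ne x a with rfl | hxa
    · rw [glueHigh_a h1 h2 h3, glueHigh_cn h1 h2 h3]
    rcases eq_or_ne x (c + n) with rfl | hxcn
    · rw [glueHigh_cn h1 h2 h3, glueHigh_a h1 h2 h3]
    rcases eq_or_ne x c with rfl | hxc
    · rw [glueHigh_c h1 h2 h3, glueHigh_an h1 h2 h3]
    rcases eq_or_ne x (a + n) with rfl | hxan
    · rw [glueHigh_an h1 h2 h3, glueHigh_c h1 h2 h3]
    by_cases hx : c < x ∧ x < b
    · rw [glueHigh_out h1 h2 h3 hx.1 hx.2]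
      rcases lnc_supp hτo' x with he | ⟨u1, u2, u3, u4⟩
      · rw [he, glueHigh_out h1 h2 h3 hx.1 hx.2, he]
      · rw [glueHigh_out h1 h2 h3 (by omega) (by omega)]
        exact invo x
    by_cases hx2 : c + n < x ∧ x < b + n
    · rw [glueHigh_copy h1 h2 h3 hx2.1 hx2.2]
      rcases lnc_supp hτo' (x - n) with he | ⟨u1, u2, u3, u4⟩
      · rw [he, show x - n + n = x by omega, glueHigh_copy h1 h2 h3 hx2.1 hx2.2, he,
          show x - n + n = x by omega]
      · rw [glueHigh_copy h1 h2 h3 (by omega) (by omega),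
          show τo (x - n) + n - n = τo (x - n) by omega, invo (x - n)]
        omega
    · have ev : glueHigh a b c n τm τo x = τm x := glueHigh_mid h1 h2 h3 (by omega)
      rw [ev]
      rcases cs_supp hτm' x with he | ⟨u1, u2⟩
      · rw [he, ev, he]
      · have ev2 : glueHigh a b c n τm τo (τm x) = τm (τm x) :=
          glueHigh_mid h1 h2 h3 (by omega)
        rw [ev2]
        exact invm x
  · intro x hx
    rw [glueHigh_mid h1 h2 h3 (by omega)]
    exact lom x (by omega)
  · intro x hx1 hx2
    rw [glueHigh_mid h1 h2 h3 (by omega)]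
    exact midm x (by omega) (by omega)
  · intro x hx
    rw [glueHigh_mid h1 h2 h3 (by omega)]
    exact him x (by omega)
  · -- NoCross
    rintro ⟨i, j, hij, hc2, hc3⟩
    have roi := lnc_supp hτo' i
    have roj := lnc_supp hτo' j
    have roi' := lnc_supp hτo' (i - n)
    have roj' := lnc_supp hτo' (j - n)
    have rmi := cs_supp hτm' i
    have rmj := cs_supp hτm' j
    unfold glueHigh at hc2 hc3
    split_ifs at hc2 hc3
    all_goals first
      | omega
      | exact No ⟨i, j, hij, hc2, hc3⟩
      | exact No ⟨i - n, j - n, by omega, by omega, by omega⟩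
      | exact Nm ⟨i, j, hij, hc2, hc3⟩
  · -- csym
    intro x hx
    rcases eq_or_ne x a with rfl | hxa
    · rw [glueHigh_a h1 h2 h3, glueHigh_an h1 h2 h3, if_neg (by omega)]
      omega
    rcases eq_or_ne x c with rfl | hxc
    · rw [glueHigh_c h1 h2 h3, glueHigh_cn h1 h2 h3, if_neg (by omega)]
      omega
    rcases Nat.lt_or_ge x a with hlt | hge
    · have e1 : glueHigh a b c n τm τo x = x := by
        rw [glueHigh_mid h1 h2 h3 (by omega)]
        exact lom x (by omega)
      have e2 : glueHigh a b c n τm τo (x + n) = x + n := by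
        rw [glueHigh_mid h1 h2 h3 (by omega)]
        exact midm (x + n) (by omega) (by omega)
      rw [e1, e2, if_pos (by omega)]
    by_cases hax : a < x ∧ x < c
    · have e1 : glueHigh a b c n τm τo x = τm x := glueHigh_mid h1 h2 h3 (by omega)
      have e2 : glueHigh a b c n τm τo (x + n) = τm (x + n) :=
        glueHigh_mid h1 h2 h3 (by omega)
      have e := symm_m x (by omega)
      have hsupp := cs_supp hτm' x
      rw [e1, e2, e]
      by_cases hc : τm x < c
      · rw [if_pos hc, if_pos (by omega)]
      · rw [if_neg hc, if_neg (by omega)]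
    · -- c < x < b
      have e1 : glueHigh a b c n τm τo x = τo x :=
        glueHigh_out h1 h2 h3 (by omega) (by omega)
      have hb : τo x < b := by
        rcases lnc_supp hτo' x with he | ⟨u1, u2, u3, u4⟩ <;> omega
      have e2 : glueHigh a b c n τm τo (x + n) = τo (x + n - n) + n :=
        glueHigh_copy h1 h2 h3 (by omega) (by omega)
      rw [e1, e2, show x + n - n = x by omega, if_pos (by omega)]

end GlueHigh

def csFiberHigh (a b n c : ℕ) : Set (ℕ → ℕ) := {σ | σ ∈ CS a b n ∧ σ a = c + n}

noncomputable def csFiberHighEquiv (a b c n : ℕ) (h1 : a < c) (h2 : c < b) (h3 : b ≤ n) :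
    ↥(csFiberHigh a b n c) ≃ ↥(CS (a + 1) c n) × ↥(LNC (c + 1) b) where
  toFun σ :=
    ⟨⟨cresf a c n σ.1, by
        obtain ⟨hσ, hv⟩ := σ.2
        have hsep := cs_sep_high hσ (by omega) h3 hv h1 h2
        exact cresf_mem hσ.1 hσ.2.2.2.2.1 (by omega) hsep.2.1 hsep.2.2.1 hsep.2.2.2.2⟩,
     ⟨resf c b σ.1,
        resf_mem σ.2.1.1 σ.2.1.2.2.2.2.1 (cs_sep_high σ.2.1 (by omega) h3 σ.2.2 h1 h2).1⟩⟩
  invFun τ := ⟨glueHigh a b c n τ.1.1 τ.2.1, glueHigh_mem τ.1.2 τ.2.2 h1 h2 h3,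
    glueHigh_a h1 h2 h3⟩
  left_inv := by
    rintro ⟨σ, hσ, hv⟩
    apply Subtype.ext
    funext x
    show glueHigh a b c n (cresf a c n σ) (resf c b σ) x = σ x
    have hsep := cs_sep_high hσ (by omega) h3 hv h1 h2
    obtain ⟨hinv, hlo, hmid, hhi, hN, hsym⟩ := hσ
    have hcn : σ (c + n) = a := by rw [← hv]; exact hinv a
    have haN : σ (a + n) = c := by
      have := hsym a (by omega); rw [hv, if_neg (by omega)] at this
      rw [this]; omega
    have hcc : σ c = a + n := by rw [← haN]; exact hinv (a + n)
    rcases eq_or_ne x a with rfl | hxa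
    · rw [glueHigh_a h1 h2 h3, hv]
    rcases eq_or_ne x (c + n) with rfl | hxcn
    · rw [glueHigh_cn h1 h2 h3, hcn]
    rcases eq_or_ne x c with rfl | hxc
    · rw [glueHigh_c h1 h2 h3, hcc]
    rcases eq_or_ne x (a + n) with rfl | hxan
    · rw [glueHigh_an h1 h2 h3, haN]
    by_cases hx : c < x ∧ x < b
    · rw [glueHigh_out h1 h2 h3 hx.1 hx.2]
      simp only [resf]
      rw [if_pos hx]
    by_cases hx2 : c + n < x ∧ x < b + n
    · rw [glueHigh_copy h1 h2 h3 hx2.1 hx2.2]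
      simp only [resf]
      rw [if_pos (by omega)]
      have e := hsym (x - n) (by omega)
      rw [show x - n + n = x by omega] at e
      have := hsep.1 (x - n) (by omega) (by omega)
      rw [e, if_pos (by omega)]
    · rw [glueHigh_mid h1 h2 h3 (by omega)]
      simp only [cresf]
      by_cases hx3 : (a < x ∧ x < c) ∨ (a + n < x ∧ x < c + n)
      · rw [if_pos hx3]
      · rw [if_neg hx3]
        rcases Nat.lt_or_ge x a with h | h
        · exact (hlo x h).symm
        rcases Nat.lt_or_ge x (a + n) with h' | h'
        · exact (hmid x (by omega) h').symm
        · exact (hhi x (by omega)).symm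
  right_inv := by
    rintro ⟨⟨τm, hτm⟩, ⟨τo, hτo⟩⟩
    have e1 : cresf a c n (glueHigh a b c n τm τo) = τm := by
      funext x
      simp only [cresf]
      by_cases hx : (a < x ∧ x < c) ∨ (a + n < x ∧ x < c + n)
      · rw [if_pos hx, glueHigh_mid h1 h2 h3 (by omega)]
      · rw [if_neg hx]
        rcases Nat.lt_or_ge x (a + 1) with h | h
        · exact (hτm.2.1 x h).symm
        rcases Nat.lt_or_ge x (c + n) with h' | h'
        · exact (hτm.2.2.1 x (by omega) (by omega)).symm
        · exact (hτm.2.2.2.1 x (by omega)).symm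
    have e2 : resf c b (glueHigh a b c n τm τo) = τo := by
      funext x
      simp only [resf]
      by_cases hx : c < x ∧ x < b
      · rw [if_pos hx, glueHigh_out h1 h2 h3 hx.1 hx.2]
      · rw [if_neg hx]
        rcases Nat.lt_or_ge x (c + 1) with h | h
        · exact (hτo.2.1 x h).symm
        · exact (hτo.2.2.1 x (by omega)).symm
    exact Prod.ext (Subtype.ext e1) (Subtype.ext e2)

/-! ### Counting symmetric circular matchings -/

lemma cs_triv' {a b n : ℕ} (hba : b ≤ a) : CS a b n = {id} := by
  ext σ
  simp only [Set.mem_singleton_iff]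
  constructor
  · rintro ⟨hinv, hlo, hmid, hhi, hN, hsym⟩
    funext x
    rcases Nat.lt_or_ge x a with h | h
    · exact hlo x h
    rcases Nat.lt_or_ge x (a + n) with h2 | h2
    · exact hmid x (by omega) h2
    · exact hhi x (by omega)
  · rintro rfl; exact id_mem_cs

lemma cs_decomp {a b n : ℕ} (hab : a < b) (hbn : b ≤ n) :
    CS a b n = ⋃ v ∈ insert a (insert (a + n)
      (Finset.Ioo a b ∪ (Finset.Ioo a b).image (· + n))), csFiberLow a b n v := by
  ext σ
  simp only [Set.mem_iUnion, csFiberLow]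
  constructor
  · intro hσ
    rcases cs_cases hσ hab hbn with h | h | h | h
    · exact ⟨a, Finset.mem_insert_self _ _, hσ, h⟩
    · exact ⟨a + n, Finset.mem_insert_of_mem (Finset.mem_insert_self _ _), hσ, h⟩
    · refine ⟨σ a, ?_, hσ, rfl⟩
      exact Finset.mem_insert_of_mem (Finset.mem_insert_of_mem
        (Finset.mem_union_left _ (Finset.mem_Ioo.mpr ⟨h.1, h.2⟩)))
    · refine ⟨σ a, ?_, hσ, rfl⟩
      refine Finset.mem_insert_of_mem (Finset.mem_insert_of_mem (Finset.mem_union_right _ ?_))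
      refine Finset.mem_image.mpr ⟨σ a - n, Finset.mem_Ioo.mpr ⟨by omega, by omega⟩, by omega⟩
  · rintro ⟨v, _, hσ, _⟩
    exact hσ

lemma sum_swap_motzkin_Ms (k : ℕ) :
    ∑ i ∈ Finset.range k, Ms i * motzkin (k - 1 - i) =
      ∑ i ∈ Finset.range k, motzkin i * Ms (k - 1 - i) := by
  rw [← Finset.sum_range_reflect (fun j => motzkin j * Ms (k - 1 - j)) k]
  apply Finset.sum_congr rfl
  intro i hi
  simp only [Finset.mem_range] at hi
  rw [show k - 1 - (k - 1 - i) = i by omega, mul_comm]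

lemma cs_ncard : ∀ m a b n : ℕ, b ≤ n → b - a ≤ m → (CS a b n).ncard = Ms (b - a) := by
  intro m
  induction m with
  | zero =>
    intro a b n hbn h
    rw [cs_triv' (by omega), Set.ncard_singleton, show b - a = 0 by omega, Ms]
  | succ m ih =>
    intro a b n hbn h
    rcases Nat.lt_or_ge a b with hab | hba
    swap
    · rw [cs_triv' hba, Set.ncard_singleton, show b - a = 0 by omega, Ms]
    rw [cs_decomp hab hbn]
    rw [ncard_biUnion _ _ (fun v _ => (cs_finite a b n).subset (fun σ hσ => hσ.1))
        (fun v _ w _ hvw => by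
          rw [Set.disjoint_left]
          rintro σ ⟨h1, h2⟩ ⟨h3, h4⟩
          exact hvw (h2 ▸ h4 ▸ rfl))]
    have hn1 : 0 < n := by omega
    rw [Finset.sum_insert (by
      intro hmem
      rcases Finset.mem_insert.mp hmem with h' | h'
      · omega
      rcases Finset.mem_union.mp h' with h' | h'
      · have := Finset.mem_Ioo.mp h'; omega
      · obtain ⟨x, hx, hx2⟩ := Finset.mem_image.mp h'
        have := Finset.mem_Ioo.mp hx; omega)]
    rw [Finset.sum_insert (by
      intro hmem
      rcases Finset.mem_union.mp hmem with h' | h'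
      · have := Finset.mem_Ioo.mp h'; omega
      · obtain ⟨x, hx, hx2⟩ := Finset.mem_image.mp h'
        have := Finset.mem_Ioo.mp hx; omega)]
    rw [Finset.sum_union (by
      rw [Finset.disjoint_left]
      intro v hv hv2
      simp only [Finset.mem_Ioo] at hv
      simp only [Finset.mem_image, Finset.mem_Ioo] at hv2
      obtain ⟨x, hx, hx2⟩ := hv2
      omega)]
    rw [Finset.sum_image (fun x _ y _ hxy => by omega)]
    -- fiber at a
    have hfix : (csFiberLow a b n a).ncard = Ms (b - a - 1) := by
      have he : csFiberLow a b n a = CS (a + 1) b n := cs_fix_eq hab hbn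
      rw [he, ih (a + 1) b n hbn (by omega)]
      congr 1
    -- fiber at a + n
    have hdiam : (csFiberLow a b n (a + n)).ncard = motzkin (b - a - 1) := by
      have he : (csFiberLow a b n (a + n)).ncard = (LNC (a + 1) b).ncard :=
        ncard_eq_of_equiv (csFiberDEquiv a b n hab hbn)
      rw [he, lnc_ncard b (a + 1) b (by omega)]
      congr 1
    -- low fibers
    have hlow : ∀ c ∈ Finset.Ioo a b,
        (csFiberLow a b n c).ncard = motzkin (c - a - 1) * Ms (b - c - 1) := by
      intro c hc
      simp only [Finset.mem_Ioo] at hc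
      rw [ncard_eq_of_equiv_prod (csFiberLowEquiv a b c n hc.1 hc.2 hbn)]
      rw [lnc_ncard c (a + 1) c (by omega), ih (c + 1) b n hbn (by omega)]
      congr 2 <;> omega
    -- high fibers
    have hhigh : ∀ c ∈ Finset.Ioo a b,
        (csFiberLow a b n (c + n)).ncard = Ms (c - a - 1) * motzkin (b - c - 1) := by
      intro c hc
      simp only [Finset.mem_Ioo] at hc
      have he' : (csFiberLow a b n (c + n)).ncard =
          (CS (a + 1) c n).ncard * (LNC (c + 1) b).ncard :=
        ncard_eq_of_equiv_prod (csFiberHighEquiv a b c n hc.1 hc.2 hbn)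
      rw [he']
      rw [ih (a + 1) c n (by omega) (by omega), lnc_ncard b (c + 1) b (by omega)]
      congr 2 <;> omega
    rw [hfix, hdiam, Finset.sum_congr rfl hlow, Finset.sum_congr rfl hhigh]
    rw [sum_Ioo_reindex motzkin Ms a b, sum_Ioo_reindex Ms motzkin a b]
    have hswap := sum_swap_motzkin_Ms (b - a - 1)
    rw [show b - a - 1 - 1 = b - a - 2 from by omega] at hswap
    rw [hswap]
    rw [Ms_rec (b - a) (by omega)]
    ring

/-- A symmetric `2`-Brauer relation of rank `2n`: an involution `σ` of `ZMod (2n)`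
which is noncrossing and symmetric with respect to rotation by `π`,
i.e. `σ (i + n) = σ i + n` for all `i`. -/
def IsSymTwoBrauer (n : ℕ) (σ : ZMod (2 * n) → ZMod (2 * n)) : Prop :=
  Function.Involutive σ ∧
    (¬ ∃ i j : ZMod (2 * n),
        i.val < j.val ∧ j.val < (σ i).val ∧ (σ i).val < (σ j).val) ∧
    ∀ i : ZMod (2 * n), σ (i + (n : ZMod (2 * n))) = σ i + (n : ZMod (2 * n))


/-! ### Bridge to `ZMod (2 * n)` -/

section Bridge

variable (n : ℕ)

def toNatFun (σ : ZMod (2 * n) → ZMod (2 * n)) : ℕ → ℕ :=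
  fun x => if x < 2 * n then (σ ((x : ℕ) : ZMod (2 * n))).val else x

def toZFun (τ : ℕ → ℕ) : ZMod (2 * n) → ZMod (2 * n) :=
  fun i => ((τ i.val : ℕ) : ZMod (2 * n))

variable {n}

lemma toNatFun_mem (hn : 1 ≤ n) {σ : ZMod (2 * n) → ZMod (2 * n)}
    (hσ : IsSymTwoBrauer n σ) : toNatFun n σ ∈ CS 0 n n := by
  haveI : NeZero (2 * n) := ⟨by omega⟩
  have cast_val : ∀ i : ZMod (2 * n), ((i.val : ℕ) : ZMod (2 * n)) = i := fun i => by
    rw [ZMod.natCast_val, ZMod.cast_id]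
  have val_lt : ∀ i : ZMod (2 * n), i.val < 2 * n := fun i => ZMod.val_lt i
  have val_n : ((n : ZMod (2 * n))).val = n := ZMod.val_cast_of_lt (by omega)
  obtain ⟨hinv, hN, hsym⟩ := hσ
  refine ⟨?_, ?_, ?_, ?_, ?_, ?_⟩
  · -- involutive
    intro x
    unfold toNatFun
    by_cases hx : x < 2 * n
    · rw [if_pos hx, if_pos (val_lt _), cast_val, hinv, ZMod.val_cast_of_lt hx]
    · rw [if_neg hx, if_neg hx]
  · intro x hx; omega
  · intro x hx1 hx2; omega
  · intro x hx
    unfold toNatFun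
    rw [if_neg (by omega)]
  · -- NoCross
    rintro ⟨i, j, h1, h2, h3⟩
    unfold toNatFun at h2 h3
    by_cases hi : i < 2 * n
    swap
    · rw [if_neg hi] at h2 h3; omega
    by_cases hj : j < 2 * n
    swap
    · rw [if_neg hj] at h3
      rw [if_pos hi] at h2 h3
      have := val_lt (σ ((i : ℕ) : ZMod (2 * n)))
      omega
    rw [if_pos hi] at h2 h3
    rw [if_pos hj] at h3
    refine hN ⟨((i : ℕ) : ZMod (2 * n)), ((j : ℕ) : ZMod (2 * n)), ?_, ?_, ?_⟩
    · rw [ZMod.val_cast_of_lt hi, ZMod.val_cast_of_lt hj]; exact h1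
    · rw [ZMod.val_cast_of_lt hj]; exact h2
    · exact h3
  · -- csym
    intro x hx
    have ex : toNatFun n σ x = (σ ((x : ℕ) : ZMod (2 * n))).val := by
      unfold toNatFun; rw [if_pos (by omega)]
    have exn : toNatFun n σ (x + n) = (σ (((x + n : ℕ)) : ZMod (2 * n))).val := by
      unfold toNatFun; rw [if_pos (by omega)]
    rw [ex, exn, Nat.cast_add x n, hsym, ZMod.val_add, val_n]
    have hvlt : (σ ((x : ℕ) : ZMod (2 * n))).val < 2 * n := val_lt _
    by_cases hvn : (σ ((x : ℕ) : ZMod (2 * n))).val < n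
    · rw [if_pos hvn, Nat.mod_eq_of_lt (by omega)]
    · rw [if_neg hvn, Nat.mod_eq_sub_mod (by omega), Nat.mod_eq_of_lt (by omega)]
      omega

lemma toZFun_mem (hn : 1 ≤ n) {τ : ℕ → ℕ} (hτ : τ ∈ CS 0 n n) :
    IsSymTwoBrauer n (toZFun n τ) := by
  haveI : NeZero (2 * n) := ⟨by omega⟩
  have cast_val : ∀ i : ZMod (2 * n), ((i.val : ℕ) : ZMod (2 * n)) = i := fun i => by
    rw [ZMod.natCast_val, ZMod.cast_id]
  have val_lt : ∀ i : ZMod (2 * n), i.val < 2 * n := fun i => ZMod.val_lt i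
  have val_n : ((n : ZMod (2 * n))).val = n := ZMod.val_cast_of_lt (by omega)
  have hτ' : τ ∈ CS 0 n n := hτ
  obtain ⟨hinv, hlo, hmid, hhi, hN, hsym⟩ := hτ
  have hrange : ∀ x, x < 2 * n → τ x < 2 * n := by
    intro x hx
    rcases cs_supp hτ' x with he | ⟨u1, u2⟩ <;> omega
  refine ⟨?_, ?_, ?_⟩
  · -- involutive
    intro i
    unfold toZFun
    rw [ZMod.val_cast_of_lt (hrange _ (val_lt i)), hinv, cast_val]
  · -- NoCross
    rintro ⟨i, j, h1, h2, h3⟩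
    unfold toZFun at h2 h3
    rw [ZMod.val_cast_of_lt (hrange _ (val_lt i))] at h2 h3
    rw [ZMod.val_cast_of_lt (hrange _ (val_lt j))] at h3
    exact hN ⟨i.val, j.val, h1, h2, h3⟩
  · -- symmetric
    intro i
    unfold toZFun
    have h2 : ((n : ZMod (2 * n)) + n) = 0 := by
      rw [← Nat.cast_add, show n + n = 2 * n from by omega, ZMod.natCast_self]
    have hvn : (i + (n : ZMod (2 * n))).val = (i.val + n) % (2 * n) := by
      rw [ZMod.val_add, val_n]
    have hxlt : i.val < 2 * n := val_lt i
    by_cases hxn : i.val < n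
    · have e1 : (i + (n : ZMod (2 * n))).val = i.val + n := by
        rw [hvn, Nat.mod_eq_of_lt (by omega)]
      rw [e1, hsym i.val hxn]
      by_cases hτx : τ i.val < n
      · rw [if_pos hτx, Nat.cast_add]
      · rw [if_neg hτx]
        calc ((τ i.val - n : ℕ) : ZMod (2 * n))
            = ((τ i.val - n : ℕ) : ZMod (2 * n)) + ((n : ZMod (2 * n)) + n) := by
              rw [h2, add_zero]
          _ = ((τ i.val - n + n + n : ℕ) : ZMod (2 * n)) := by push_cast; ring
          _ = ((τ i.val + n : ℕ) : ZMod (2 * n)) := by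
              rw [show τ i.val - n + n + n = τ i.val + n from by omega]
          _ = ((τ i.val : ℕ) : ZMod (2 * n)) + n := Nat.cast_add _ _
    · have e1 : (i + (n : ZMod (2 * n))).val = i.val - n := by
        rw [hvn, Nat.mod_eq_sub_mod (by omega), Nat.mod_eq_of_lt (by omega)]
        omega
      rw [e1]
      have e2 := hsym (i.val - n) (by omega)
      rw [show i.val - n + n = i.val from by omega] at e2
      by_cases hτx : τ (i.val - n) < n
      · rw [if_pos hτx] at e2
        rw [e2]
        calc ((τ (i.val - n) : ℕ) : ZMod (2 * n))
            = ((τ (i.val - n) : ℕ) : ZMod (2 * n)) + ((n : ZMod (2 * n)) + n) := by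
              rw [h2, add_zero]
          _ = ((τ (i.val - n) + n : ℕ) : ZMod (2 * n)) + n := by push_cast; ring
      · rw [if_neg hτx] at e2
        rw [e2, ← Nat.cast_add, show τ (i.val - n) - n + n = τ (i.val - n) from by omega]

lemma bridge_ncard (hn : 1 ≤ n) :
    {σ : ZMod (2 * n) → ZMod (2 * n) | IsSymTwoBrauer n σ}.ncard = (CS 0 n n).ncard := by
  haveI : NeZero (2 * n) := ⟨by omega⟩
  have cast_val : ∀ i : ZMod (2 * n), ((i.val : ℕ) : ZMod (2 * n)) = i := fun i => by
    rw [ZMod.natCast_val, ZMod.cast_id]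
  have val_lt : ∀ i : ZMod (2 * n), i.val < 2 * n := fun i => ZMod.val_lt i
  rw [← Nat.card_coe_set_eq, ← Nat.card_coe_set_eq]
  refine Nat.card_congr (Equiv.mk
    (fun s => ⟨toNatFun n s.1, toNatFun_mem hn s.2⟩)
    (fun t => ⟨toZFun n t.1, toZFun_mem hn t.2⟩) ?_ ?_)
  · rintro ⟨σ, hσ⟩
    apply Subtype.ext
    funext i
    show toZFun n (toNatFun n σ) i = σ i
    unfold toZFun toNatFun
    rw [if_pos (val_lt i), cast_val, cast_val]
  · rintro ⟨τ, hτ⟩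
    apply Subtype.ext
    funext x
    show toNatFun n (toZFun n τ) x = τ x
    have hτ' : τ ∈ CS 0 n n := hτ
    have hrange : ∀ y, y < 2 * n → τ y < 2 * n := by
      intro y hy
      rcases cs_supp hτ' y with he | ⟨u1, u2⟩ <;> omega
    unfold toNatFun toZFun
    by_cases hx : x < 2 * n
    · rw [if_pos hx, ZMod.val_cast_of_lt hx, ZMod.val_cast_of_lt (hrange x hx)]
    · rw [if_neg hx]
      exact (hτ.2.2.2.1 x (by omega)).symm

end Bridge

/-- Proposition 7.3 (recursive form): for every `n ≥ 1`, the set of symmetric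
`2`-Brauer relations of rank `2n` is finite and its cardinality equals `Ms n`. -/
theorem card_symTwoBrauer_eq_Ms (n : ℕ) (hn : 1 ≤ n) :
    {σ : ZMod (2 * n) → ZMod (2 * n) | IsSymTwoBrauer n σ}.Finite ∧
      {σ : ZMod (2 * n) → ZMod (2 * n) | IsSymTwoBrauer n σ}.ncard = Ms n := by
  haveI : NeZero (2 * n) := ⟨by omega⟩
  constructor
  · exact Set.toFinite _
  · rw [bridge_ncard hn, cs_ncard n 0 n n le_rfl (by omega)]
    congr 1
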